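/- For the gap sequence (μ_n) of a Cantor-like sequence, the closed form Σ_{i=1}^{2^n − 1} μ_i = (l_1+l_2)/(l_3−2)·(l_3^n − 2^n) − l_2·(l_3^n − 1)/(l_3 − 1) holds for all n ≥ 1 (with l_3 ≥ 3 so the denominators are nonzero). -/

import Mathlib

lemma split_sum_aux (μ : ℕ → ℕ) : ∀ m : ℕ,
    ∑ i ∈ Finset.Icc 1 (2 * m + 1), μ i
      = μ 1 + ∑ k ∈ Finset.Icc 1 m, (μ (2 * k) + μ (2 * k + 1)) := by
  intro m
  induction m with
  | zero => simp
  | succ m ih =>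
    have e1 : 2 * (m + 1) + 1 = (2 * m + 1) + 1 + 1 := by ring
    rw [e1, Finset.sum_Icc_succ_top (by omega), Finset.sum_Icc_succ_top (by omega), ih,
        Finset.sum_Icc_succ_top (by omega : 1 ≤ m + 1)]
    have e2 : 2 * m + 1 + 1 = 2 * (m + 1) := by ring
    rw [e2]
    ring

/-- ∑_{i=1}^{2^n−1} μ_i
      = (l₁+l₂)(l₃^n − 2^n)/(l₃−2) − l₂(l₃^n − 1)/(l₃−1) for all n ≥ 1,
    stated additively with (l₃^n − 2^n)/(l₃−2) = ∑_{i<n} l₃^i 2^{n-1-i} and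
    (l₃^n − 1)/(l₃−1) = ∑_{i<n} l₃^i. -/
theorem stmt6 (l1 l2 l3 : ℕ) (hl3 : 3 ≤ l3) (μ : ℕ → ℕ)
    (h1 : μ 1 = l1)
    (h2 : ∀ n : ℕ, 1 ≤ n → μ (2 * n) = l3 * μ n + l2)
    (h3 : ∀ n : ℕ, 1 ≤ n → μ (2 * n + 1) = l1) :
    ∀ n : ℕ, 1 ≤ n →
      (∑ i ∈ Finset.Icc 1 (2 ^ n - 1), μ i) + l2 * (∑ i ∈ Finset.range n, l3 ^ i)
        = (l1 + l2) * (∑ i ∈ Finset.range n, l3 ^ i * 2 ^ (n - 1 - i)) := by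
  intro n hn
  induction n with
  | zero => omega
  | succ n ih =>
    rcases Nat.lt_or_ge n 1 with h | hn1
    · interval_cases n
      simp [h1]
    · have IH := ih hn1
      set S := ∑ i ∈ Finset.Icc 1 (2 ^ n - 1), μ i with hS
      set G := ∑ i ∈ Finset.range n, l3 ^ i with hG
      set A := ∑ i ∈ Finset.range n, l3 ^ i * 2 ^ (n - 1 - i) with hA
      have h2n : 1 ≤ 2 ^ n := Nat.one_le_two_pow
      have hm : 2 ^ (n + 1) - 1 = 2 * (2 ^ n - 1) + 1 := by omega
      -- split the sum
      have hsplit : ∑ i ∈ Finset.Icc 1 (2 ^ (n + 1) - 1), μ i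
          = l1 + (l3 * S + (l2 + l1) * (2 ^ n - 1)) := by
        rw [hm, split_sum_aux μ, h1]
        congr 1
        have hterm : ∀ k ∈ Finset.Icc 1 (2 ^ n - 1), μ (2 * k) + μ (2 * k + 1)
            = l3 * μ k + (l2 + l1) := by
          intro k hk
          rw [Finset.mem_Icc] at hk
          rw [h2 k hk.1, h3 k hk.1]
          ring
        rw [Finset.sum_congr rfl hterm, Finset.sum_add_distrib, Finset.sum_const,
            ← Finset.mul_sum, smul_eq_mul, Nat.card_Icc]
        have : 2 ^ n - 1 + 1 - 1 = 2 ^ n - 1 := by omega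
        rw [this, ← hS]
        ring
      -- G recurrence
      have hGrec : ∑ i ∈ Finset.range (n + 1), l3 ^ i = G + l3 ^ n := by
        rw [Finset.sum_range_succ]
      have hGrec2 : G + l3 ^ n = l3 * G + 1 := by
        have h' := Finset.sum_range_succ (fun i => l3 ^ i) n
        have h'' := Finset.sum_range_succ' (fun i => l3 ^ i) n
        simp only [pow_succ, pow_zero] at h' h''
        rw [hG, ← h', h'', Finset.mul_sum]
        simp [mul_comm]
      -- A recurrence
      have hArec : ∑ i ∈ Finset.range (n + 1), l3 ^ i * 2 ^ (n + 1 - 1 - i)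
          = l3 * A + 2 ^ n := by
        rw [Finset.sum_range_succ' (fun i => l3 ^ i * 2 ^ (n + 1 - 1 - i)) n]
        simp only [Nat.add_sub_cancel, pow_zero, one_mul, Nat.sub_zero]
        congr 1
        rw [hA, Finset.mul_sum]
        apply Finset.sum_congr rfl
        intro i hi
        have : n - (i + 1) = n - 1 - i := by omega
        rw [this, pow_succ]
        ring
      have key : l3 * S + l3 * (l2 * G) = l3 * ((l1 + l2) * A) := by
        rw [← Nat.mul_add, IH]
      have expand : l2 * (G + l3 ^ n) = l3 * (l2 * G) + l2 := by
        rw [hGrec2]; ring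
      obtain ⟨m, hm2⟩ : ∃ m, 2 ^ n = m + 1 := ⟨2 ^ n - 1, by omega⟩
      rw [hsplit, hGrec, hArec, expand, hm2]
      simp only [Nat.add_sub_cancel]
      calc l1 + (l3 * S + (l2 + l1) * m) + (l3 * (l2 * G) + l2)
          = (l3 * S + l3 * (l2 * G)) + ((l2 + l1) * m + l1 + l2) := by ring
        _ = l3 * ((l1 + l2) * A) + (l1 + l2) * (m + 1) := by rw [key]; ring
        _ = (l1 + l2) * (l3 * A + (m + 1)) := by ring
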